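/- Let v : ℝ → ℝ and n : ℝ → ℝ be differentiable functions and c₀ ≠ 0 a real constant. Suppose x, y : ℝ → ℝ are twice differentiable functions satisfying x''(t) = (c₀/2) * v'(x(t)) and x(t) * y''(t) = (c₀ * y(t) * v'(x(t)) + 2 * n'(t))/2 for all t. Then the function I(t) = -(1/c₀) * (x'(t))^2 + y(t) * x'(t) - x(t) * y'(t) + v(x(t)) + n(t) is constant in t (i.e., its derivative vanishes identically). -/

import Mathlib

theorem quadratic_first_integral_application
    (v n x y : ℝ → ℝ) (c₀ : ℝ) (hc₀ : c₀ ≠ 0)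
    (hv : Differentiable ℝ v) (hn : Differentiable ℝ n)
    (hx : Differentiable ℝ x) (hx' : Differentiable ℝ (deriv x))
    (hy : Differentiable ℝ y) (hy' : Differentiable ℝ (deriv y))
    (heqx : ∀ t, deriv (deriv x) t = (c₀ / 2) * deriv v (x t))
    (heqy : ∀ t, x t * deriv (deriv y) t =
      (c₀ * y t * deriv v (x t) + 2 * deriv n t) / 2) :
    ∀ t, deriv (fun t => -(1 / c₀) * (deriv x t) ^ 2 + y t * deriv x t
      - x t * deriv y t + v (x t) + n t) t = 0 := by
  intro t
  have Hx : HasDerivAt x (deriv x t) t := (hx t).hasDerivAt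
  have Hx' : HasDerivAt (deriv x) (deriv (deriv x) t) t := (hx' t).hasDerivAt
  have Hy : HasDerivAt y (deriv y t) t := (hy t).hasDerivAt
  have Hy' : HasDerivAt (deriv y) (deriv (deriv y) t) t := (hy' t).hasDerivAt
  have Hn : HasDerivAt n (deriv n t) t := (hn t).hasDerivAt
  have Hv : HasDerivAt v (deriv v (x t)) (x t) := (hv (x t)).hasDerivAt
  have Hvx : HasDerivAt (fun t => v (x t)) (deriv v (x t) * deriv x t) t := Hv.comp t Hx
  have H : HasDerivAt (fun t => -(1 / c₀) * (deriv x t) ^ 2 + y t * deriv x t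
      - x t * deriv y t + v (x t) + n t)
      (-(1 / c₀) * (2 * deriv x t * deriv (deriv x) t)
        + (deriv y t * deriv x t + y t * deriv (deriv x) t)
        - (deriv x t * deriv y t + x t * deriv (deriv y) t)
        + deriv v (x t) * deriv x t + deriv n t) t := by
    have := ((((Hx'.pow 2).const_mul (-(1/c₀))).add (Hy.mul Hx')).sub (Hx.mul Hy')).add Hvx |>.add Hn
    refine this.congr_deriv ?_
    push_cast
    ring
  rw [H.deriv, heqx t]
  have h2 := heqy t
  linear_combination -h2 - (deriv x t * deriv v (x t)) * mul_inv_cancel₀ hc₀
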